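/- Let K = U_E Δ U_Eᵀ with U_E ∈ O(3) and Δ = diag(d₁,d₂,d₃), dᵢ > 0 pairwise distinct. Then the critical points of Q ↦ ⟨I − Q, K⟩ on SO(3) (i.e., solutions of KQ = QᵀK) are exactly Q ∈ {I, Q₁, Q₂, Q₃} where Qᵢ = 2U_E aᵢ aᵢᵀ U_Eᵀ − I and aᵢ is the i-th standard basis vector. -/

import Mathlib

open Matrix

/-- `SO(3)`. -/
def SO3 (R : Matrix (Fin 3) (Fin 3) ℝ) : Prop :=
  Rᵀ * R = 1 ∧ R.det = 1

private lemma diag_cand (k : Fin 3) :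
    2 • (Matrix.single k k (1:ℝ)) - 1 =
      diagonal (fun i => if i = k then (1:ℝ) else -1) := by
  ext i j
  simp only [Matrix.sub_apply, Matrix.smul_apply, Matrix.one_apply, Matrix.diagonal_apply,
    Matrix.single, Matrix.of_apply]
  by_cases hij : i = j
  · subst hij
    by_cases hik : i = k
    · subst hik
      simp only [if_pos rfl, and_self, if_pos (rfl : i = i)]
      norm_num
    · have : ¬(k = i ∧ k = i) := fun h => hik h.1.symm
      simp only [this, if_neg, if_pos (rfl : i = i), if_neg hik]
      norm_num
  · have h1 : ¬(k = i ∧ k = j) := by rintro ⟨rfl, rfl⟩; exact hij rfl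
    simp only [if_neg h1, if_neg hij]
    norm_num

private lemma diag_case (d : Fin 3 → ℝ) (hd : ∀ i, 0 < d i)
    (hdist : ∀ i j, i ≠ j → d i ≠ d j) (P : Matrix (Fin 3) (Fin 3) ℝ) :
    (SO3 P ∧ diagonal d * P = Pᵀ * diagonal d) ↔
      (P = 1 ∨
       P = 2 • (Matrix.single 0 0 (1 : ℝ)) - 1 ∨
       P = 2 • (Matrix.single 1 1 (1 : ℝ)) - 1 ∨
       P = 2 • (Matrix.single 2 2 (1 : ℝ)) - 1) := by
  constructor
  · rintro ⟨⟨hP, hdet⟩, hsym⟩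
    have hP' : P * Pᵀ = 1 := mul_eq_one_comm.mp hP
    have h3 : P * diagonal d * P = diagonal d := by
      rw [mul_assoc, hsym, ← mul_assoc, hP', one_mul]
    have h4 : P * diagonal d = diagonal d * Pᵀ := by
      have := congrArg (· * Pᵀ) h3
      simpa [mul_assoc, hP'] using this
    have h5 : P * (diagonal d * diagonal d) = (diagonal d * diagonal d) * P := by
      calc P * (diagonal d * diagonal d) = (P * diagonal d) * diagonal d := (mul_assoc _ _ _).symm
        _ = diagonal d * Pᵀ * diagonal d := by rw [h4]
        _ = diagonal d * (Pᵀ * diagonal d) := mul_assoc _ _ _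
        _ = diagonal d * (diagonal d * P) := by rw [← hsym]
        _ = (diagonal d * diagonal d) * P := (mul_assoc _ _ _).symm
    have hoff : ∀ i j, i ≠ j → P i j = 0 := by
      intro i j hij
      rw [diagonal_mul_diagonal] at h5
      have h := congrFun (congrFun h5 i) j
      rw [Matrix.mul_diagonal, Matrix.diagonal_mul] at h
      have hne : d j * d j ≠ d i * d i := by
        have h1 := hd i; have h2 := hd j; have h3 := hdist i j hij
        rcases lt_or_gt_of_ne h3 with hlt | hlt
        · nlinarith
        · nlinarith
      have hz : P i j * (d j * d j - d i * d i) = 0 := by linarith [h]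
      rcases mul_eq_zero.mp hz with h' | h'
      · exact h'
      · exact absurd (by linarith : d j * d j = d i * d i) hne
    have hPdiag : P = diagonal (fun i => P i i) := by
      ext i j
      by_cases hij : i = j
      · subst hij; simp
      · simp [Matrix.diagonal_apply_ne _ hij, hoff i j hij]
    have hv : ∀ i, P i i = 1 ∨ P i i = -1 := by
      intro i
      have hP2 := hP
      rw [hPdiag, Matrix.diagonal_transpose, diagonal_mul_diagonal] at hP2
      have h := congrFun (congrFun hP2 i) i
      rw [Matrix.diagonal_apply_eq, Matrix.one_apply_eq] at h
      exact mul_self_eq_one_iff.mp h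
    have hprod : P 0 0 * P 1 1 * P 2 2 = 1 := by
      have hdet2 := hdet
      rw [hPdiag, Matrix.det_diagonal, Fin.prod_univ_three] at hdet2
      exact hdet2
    rcases hv 0 with h0 | h0 <;> rcases hv 1 with h1 | h1 <;> rcases hv 2 with h2 | h2 <;>
      rw [h0, h1, h2] at hprod <;> try norm_num at hprod
    · left
      rw [hPdiag]; ext i j
      fin_cases i <;> fin_cases j <;>
        simp [Matrix.diagonal_apply, Matrix.one_apply, h0, h1, h2]
    · right; left
      have hfun : (fun i => P i i) = (fun i : Fin 3 => if i = 0 then (1:ℝ) else -1) := by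
        funext i; fin_cases i <;> simp [h0, h1, h2]
      rw [hPdiag, hfun, ← diag_cand]
    · right; right; left
      have hfun : (fun i => P i i) = (fun i : Fin 3 => if i = 1 then (1:ℝ) else -1) := by
        funext i; fin_cases i <;> simp [h0, h1, h2]
      rw [hPdiag, hfun, ← diag_cand]
    · right; right; right
      have hfun : (fun i => P i i) = (fun i : Fin 3 => if i = 2 then (1:ℝ) else -1) := by
        funext i; fin_cases i <;> simp [h0, h1, h2]
      rw [hPdiag, hfun, ← diag_cand]
  · intro h
    have key : ∀ v : Fin 3 → ℝ, (∀ i, v i = 1 ∨ v i = -1) → (v 0 * v 1 * v 2 = 1) →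
        SO3 (diagonal v) ∧ diagonal d * diagonal v = (diagonal v)ᵀ * diagonal d := by
      intro v hv hp
      refine ⟨⟨?_, ?_⟩, ?_⟩
      · rw [Matrix.diagonal_transpose, diagonal_mul_diagonal]
        have : (fun i => v i * v i) = fun _ : Fin 3 => (1:ℝ) := by
          funext i; rcases hv i with h | h <;> rw [h] <;> norm_num
        rw [this, Matrix.diagonal_one]
      · rw [Matrix.det_diagonal, Fin.prod_univ_three]; exact hp
      · rw [Matrix.diagonal_transpose, diagonal_mul_diagonal, diagonal_mul_diagonal]
        have : (fun i => d i * v i) = fun i => v i * d i := funext fun i => mul_comm _ _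
        rw [this]
    rcases h with h | h | h | h <;> subst h
    · exact ⟨⟨by simp, by simp⟩, by simp⟩
    · rw [diag_cand]
      exact key _ (fun i => by fin_cases i <;> simp) (by norm_num [Fin.ext_iff])
    · rw [diag_cand]
      exact key _ (fun i => by fin_cases i <;> simp) (by norm_num [Fin.ext_iff])
    · rw [diag_cand]
      exact key _ (fun i => by fin_cases i <;> simp) (by norm_num [Fin.ext_iff])

private lemma conj_dir (U K Q : Matrix (Fin 3) (Fin 3) ℝ) (hU : Uᵀ * U = 1)
    (h1 : SO3 Q) (h2 : K * Q = Qᵀ * K) :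
    SO3 (Uᵀ * Q * U) ∧ (Uᵀ * K * U) * (Uᵀ * Q * U) = (Uᵀ * Q * U)ᵀ * (Uᵀ * K * U) := by
  have hU' : U * Uᵀ = 1 := mul_eq_one_comm.mp hU
  have e1 : ∀ A : Matrix (Fin 3) (Fin 3) ℝ, U * (Uᵀ * A) = A := fun A => by
    rw [← mul_assoc, hU', one_mul]
  refine ⟨⟨?_, ?_⟩, ?_⟩
  · simp only [Matrix.transpose_mul, Matrix.transpose_transpose, Matrix.mul_assoc, e1]
    rw [show Qᵀ * (Q * U) = U from by rw [← mul_assoc, h1.1, one_mul], hU]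
  · rw [Matrix.det_mul, Matrix.det_mul, Matrix.det_transpose]
    have hdU : U.det * U.det = 1 := by
      have := congrArg Matrix.det hU
      rwa [Matrix.det_mul, Matrix.det_transpose, Matrix.det_one] at this
    rw [h1.2, mul_one]; exact hdU
  · simp only [Matrix.transpose_mul, Matrix.transpose_transpose, Matrix.mul_assoc, e1]
    rw [show K * (Q * U) = Qᵀ * (K * U) from by rw [← mul_assoc, h2, mul_assoc]]

private lemma conj_expand (U : Matrix (Fin 3) (Fin 3) ℝ) (hU' : U * Uᵀ = 1)
    (E : Matrix (Fin 3) (Fin 3) ℝ) :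
    U * (2 • E - 1) * Uᵀ = 2 • (U * E * Uᵀ) - 1 := by
  rw [Matrix.mul_sub, Matrix.sub_mul, Matrix.mul_one, hU']
  congr 1
  rw [Matrix.mul_smul, Matrix.smul_mul]

/-- with `K = U_E Δ U_Eᵀ`, `U_E ∈ O(3)`, `Δ = diag(d₁,d₂,d₃)` with pairwise
distinct positive entries, the critical points of `Q ↦ ⟨I − Q, K⟩` on `SO(3)` (the solutions
of `KQ = QᵀK`) are exactly `{I, Q₁, Q₂, Q₃}` where `Qᵢ = 2 U_E aᵢ aᵢᵀ U_Eᵀ − I`. -/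
theorem critical_points_wahba (UE : Matrix (Fin 3) (Fin 3) ℝ) (hUE : UEᵀ * UE = 1)
    (d : Fin 3 → ℝ) (hd : ∀ i, 0 < d i) (hdist : ∀ i j, i ≠ j → d i ≠ d j)
    (Q : Matrix (Fin 3) (Fin 3) ℝ) :
    (SO3 Q ∧ (UE * Matrix.diagonal d * UEᵀ) * Q = Qᵀ * (UE * Matrix.diagonal d * UEᵀ)) ↔
      (Q = 1 ∨
       Q = 2 • (UE * Matrix.single 0 0 (1 : ℝ) * UEᵀ) - 1 ∨
       Q = 2 • (UE * Matrix.single 1 1 (1 : ℝ) * UEᵀ) - 1 ∨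
       Q = 2 • (UE * Matrix.single 2 2 (1 : ℝ) * UEᵀ) - 1) := by
  have hU' : UE * UEᵀ = 1 := mul_eq_one_comm.mp hUE
  have hKconj : UEᵀ * (UE * Matrix.diagonal d * UEᵀ) * UE = diagonal d := by
    simp only [← Matrix.mul_assoc]
    rw [hUE, one_mul, Matrix.mul_assoc, hUE, Matrix.mul_one]
  have hQrec : UE * (UEᵀ * Q * UE) * UEᵀ = Q := by
    simp only [← Matrix.mul_assoc]
    rw [hU', one_mul, Matrix.mul_assoc, hU', Matrix.mul_one]
  constructor
  · rintro ⟨hso, hcrit⟩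
    have hc := conj_dir UE (UE * Matrix.diagonal d * UEᵀ) Q hUE hso hcrit
    rw [hKconj] at hc
    have hres := (diag_case d hd hdist (UEᵀ * Q * UE)).mp hc
    rcases hres with h | h | h | h
    · left; rw [← hQrec, h, Matrix.mul_one, hU']
    · right; left
      rw [← hQrec, h, conj_expand UE hU']
    · right; right; left
      rw [← hQrec, h, conj_expand UE hU']
    · right; right; right
      rw [← hQrec, h, conj_expand UE hU']
  · intro h
    have hback : ∀ P : Matrix (Fin 3) (Fin 3) ℝ,
        SO3 P ∧ diagonal d * P = Pᵀ * diagonal d →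
        SO3 (UE * P * UEᵀ) ∧
          (UE * Matrix.diagonal d * UEᵀ) * (UE * P * UEᵀ)
            = (UE * P * UEᵀ)ᵀ * (UE * Matrix.diagonal d * UEᵀ) := by
      intro P ⟨hPso, hPc⟩
      have hc := conj_dir UEᵀ (diagonal d) P
        (by rw [Matrix.transpose_transpose]; exact hU') hPso hPc
      simpa only [Matrix.transpose_transpose] using hc
    rcases h with h | h | h | h
    · subst h
      exact ⟨⟨by simp, by simp⟩, by simp⟩
    · have hP := (diag_case d hd hdist _).mpr (Or.inr (Or.inl rfl))
      have := hback _ hP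
      rwa [conj_expand UE hU', ← h] at this
    · have hP := (diag_case d hd hdist _).mpr (Or.inr (Or.inr (Or.inl rfl)))
      have := hback _ hP
      rwa [conj_expand UE hU', ← h] at this
    · have hP := (diag_case d hd hdist _).mpr (Or.inr (Or.inr (Or.inr rfl)))
      have := hback _ hP
      rwa [conj_expand UE hU', ← h] at this
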